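/- Let d ≥ 1, t₀ < 0, and let M : (−∞, t₀] → Matrix (Fin d) (Fin d) ℝ be continuous with ‖M(t) − (1/t)·I_d‖ ≤ C/t² for all t ≤ t₀ and some constant C > 0. Define h(t) = exp( (1/2) ∫_{t₀}^{t} tr M(s) ds ) for t ≤ t₀. Then there exists a constant c > 0 such that h(t)·|t|^{-d/2} → c as t → −∞. -/

import Mathlib

attribute [local instance] Matrix.normedAddCommGroup Matrix.normedSpace

open MeasureTheory Filter Real Set intervalIntegral Topology

/-- Asymptotics of the dispersion factor `h(t) = exp((1/2)∫_{t₀}^t tr M(s) ds)` in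
Mehler's formula: if `M(t) = (1/t)·I + O(1/t²)` on `(-∞, t₀]`, then
`h(t)·|t|^{-d/2}` converges to some `c > 0` as `t → -∞`. -/
theorem stmt_2 (d : ℕ) (hd : 1 ≤ d) (t₀ C : ℝ) (ht₀ : t₀ < 0) (hC : 0 < C)
    (M : ℝ → Matrix (Fin d) (Fin d) ℝ)
    (hMc : ContinuousOn M (Set.Iic t₀))
    (hM : ∀ t ∈ Set.Iic t₀,
      ‖M t - (1/t) • (1 : Matrix (Fin d) (Fin d) ℝ)‖ ≤ C / t ^ 2) :
    ∃ c : ℝ, 0 < c ∧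
      Filter.Tendsto
        (fun t : ℝ =>
          Real.exp ((1/2) * ∫ s in t₀..t, (M s).trace) * |t| ^ (-(d : ℝ)/2))
        Filter.atBot (nhds c) := by
  set R : ℝ → ℝ := fun s => (M s).trace - d / s with hRdef
  -- continuity of the trace
  have htrc : ContinuousOn (fun s => (M s).trace) (Set.Iic t₀) := by
    simp only [Matrix.trace, Matrix.diag]
    exact continuousOn_finset_sum _ fun i _ =>
      (continuous_apply i).comp_continuousOn ((continuous_apply i).comp_continuousOn hMc)
  have hRc : ContinuousOn R (Set.Iic t₀) := by
    apply htrc.sub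
    exact ContinuousOn.div continuousOn_const continuousOn_id
      fun s hs => ne_of_lt (lt_of_le_of_lt hs ht₀)
  -- pointwise bound on R
  have hRb : ∀ s ∈ Set.Iic t₀, ‖R s‖ ≤ (d * C) / s ^ 2 := by
    intro s hs
    have hs0 : s ≠ 0 := ne_of_lt (lt_of_le_of_lt hs ht₀)
    have h1 : R s = (M s - (1/s) • (1 : Matrix (Fin d) (Fin d) ℝ)).trace := by
      rw [Matrix.trace_sub, Matrix.trace_smul, Matrix.trace_one]
      simp [hRdef, div_eq_mul_inv, mul_comm]
    rw [h1]
    set A := M s - (1/s) • (1 : Matrix (Fin d) (Fin d) ℝ) with hA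
    have h2 : ‖A.trace‖ ≤ ∑ i : Fin d, ‖A i i‖ := norm_sum_le _ _
    have h3 : ∑ i : Fin d, ‖A i i‖ ≤ ∑ _i : Fin d, ‖A‖ :=
      Finset.sum_le_sum fun i _ => Matrix.norm_entry_le_entrywise_sup_norm A
    have h4 : (∑ _i : Fin d, ‖A‖) = d * ‖A‖ := by
      rw [Finset.sum_const, Finset.card_univ, Fintype.card_fin, nsmul_eq_mul]
    calc ‖A.trace‖ ≤ (d : ℝ) * ‖A‖ := by rw [← h4]; exact h2.trans h3
    _ ≤ (d : ℝ) * (C / s ^ 2) :=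
        mul_le_mul_of_nonneg_left (hM s hs) (by positivity)
    _ = d * C / s ^ 2 := by ring
  -- interval integrability of R
  have hRii : ∀ t ≤ t₀, IntervalIntegrable R volume t t₀ := fun t ht =>
    (hRc.mono Set.Icc_subset_Iic_self).intervalIntegrable_of_Icc ht
  -- integrability of R on Iic t₀
  have hRint : IntegrableOn R (Set.Iic t₀) := by
    have hioc : ∀ t : ℝ, IntegrableOn R (Set.Ioc (id t) t₀) := by
      intro t
      by_cases ht : t ≤ t₀
      · exact (hRii t ht).1
      · rw [id_eq, Set.Ioc_eq_empty (by simpa using le_of_not_ge ht)]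
        simp
    apply integrableOn_Iic_of_intervalIntegral_norm_bounded
      ((d * C) * (-t₀⁻¹)) t₀ hioc tendsto_id
    filter_upwards [eventually_le_atBot t₀] with t ht
    simp only [id_eq]
    have ht0 : t < 0 := lt_of_le_of_lt ht ht₀
    have h0 : (0:ℝ) ∉ Set.uIcc t t₀ := Set.notMem_uIcc_of_gt ht0 ht₀
    have hcomp : IntervalIntegrable (fun x => (d*C) * x ^ (-2:ℤ)) volume t t₀ := by
      apply ContinuousOn.intervalIntegrable
      exact continuousOn_const.mul (continuousOn_id.zpow₀ _
        fun x hx => Or.inl (fun hx0 => h0 (hx0 ▸ hx)))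
    have hmono : (∫ x in t..t₀, ‖R x‖) ≤ ∫ x in t..t₀, (d*C) * x ^ (-2:ℤ) := by
      apply intervalIntegral.integral_mono_on ht (hRii t ht).norm hcomp
      intro x hx
      have hx0 : x ≠ 0 := fun hx0 => h0 (hx0 ▸ Set.Icc_subset_uIcc hx)
      have : (d*C:ℝ) * x ^ (-2:ℤ) = d * C / x ^ 2 := by
        rw [zpow_neg]
        norm_num [div_eq_mul_inv]
      rw [this]
      exact hRb x (hx.2.trans le_rfl)
    have hcalc : (∫ x in t..t₀, (d*C) * x ^ (-2:ℤ)) = (d*C) * (t⁻¹ - t₀⁻¹) := by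
      rw [intervalIntegral.integral_const_mul,
        integral_zpow (Or.inr ⟨by norm_num, h0⟩)]
      norm_num
      left; ring
    have hinv : t⁻¹ ≤ 0 := le_of_lt (inv_neg''.mpr ht0)
    calc (∫ x in t..t₀, ‖R x‖) ≤ (d*C) * (t⁻¹ - t₀⁻¹) := hmono.trans_eq hcalc
    _ ≤ (d*C) * (-t₀⁻¹) := by
        apply mul_le_mul_of_nonneg_left _ (by positivity)
        linarith
  -- the limit
  set L : ℝ := ∫ x in Set.Iic t₀, R x with hL
  have habs0 : (0:ℝ) < |t₀| := abs_pos.mpr (ne_of_lt ht₀)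
  refine ⟨Real.exp ((1/2) * (-L)) * |t₀| ^ (-(d : ℝ)/2),
    mul_pos (Real.exp_pos _) (Real.rpow_pos_of_pos habs0 _), ?_⟩
  -- convergence of the auxiliary function
  have h1 : Tendsto (fun t => ∫ s in t₀..t, R s) atBot (𝓝 (-L)) := by
    have := (intervalIntegral_tendsto_integral_Iic t₀ hRint tendsto_id).neg
    refine this.congr fun t => ?_
    rw [intervalIntegral.integral_symm, neg_neg, id_eq]
  have h2 : Tendsto (fun t => Real.exp ((1/2) * ∫ s in t₀..t, R s) * |t₀| ^ (-(d : ℝ)/2))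
      atBot (𝓝 (Real.exp ((1/2) * (-L)) * |t₀| ^ (-(d : ℝ)/2))) :=
    ((Real.continuous_exp.tendsto _).comp (h1.const_mul (1/2))).mul_const _
  -- eventual equality
  refine h2.congr' ?_
  filter_upwards [eventually_le_atBot t₀] with t ht
  have ht0 : t < 0 := lt_of_le_of_lt ht ht₀
  have hdiv : (0:ℝ) < t / t₀ := div_pos_of_neg_of_neg ht0 ht₀
  -- split the integral
  have hinv : IntervalIntegrable (fun s => (d:ℝ) * s⁻¹) volume t t₀ := by
    apply ContinuousOn.intervalIntegrable_of_Icc ht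
    exact continuousOn_const.mul (continuousOn_inv₀.mono
      fun s hs => ne_of_lt (lt_of_le_of_lt hs.2 ht₀))
  have hsplit : (∫ s in t₀..t, (M s).trace)
      = (∫ s in t₀..t, R s) + (d:ℝ) * Real.log (t / t₀) := by
    have heq : ∀ s, (M s).trace = R s + (d:ℝ) * s⁻¹ := by
      intro s
      simp [hRdef, div_eq_mul_inv]
    simp_rw [heq]
    rw [intervalIntegral.integral_add (hRii t ht).symm hinv.symm,
      intervalIntegral.integral_const_mul, integral_inv_of_neg ht₀ ht0]
  rw [hsplit, mul_add, Real.exp_add, mul_assoc,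
    mul_comm (Real.exp ((1/2) * ((d:ℝ) * Real.log (t/t₀))))]
  rw [← mul_assoc, mul_assoc]
  congr 1
  have habs : t / t₀ = |t| / |t₀| := by
    rw [abs_of_neg ht0, abs_of_neg ht₀, neg_div_neg_eq]
  have hexp : Real.exp ((1/2) * ((d:ℝ) * Real.log (t/t₀))) = (t/t₀) ^ ((d:ℝ)/2) := by
    rw [Real.rpow_def_of_pos hdiv]
    congr 1
    ring
  rw [mul_comm, hexp, habs, Real.div_rpow (abs_nonneg t) (abs_nonneg t₀)]
  rw [show -(d:ℝ)/2 = -((d:ℝ)/2) by ring, Real.rpow_neg (abs_nonneg t₀),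
    Real.rpow_neg (abs_nonneg t)]
  have htne : |t| ^ ((d:ℝ)/2) ≠ 0 := ne_of_gt (Real.rpow_pos_of_pos (abs_pos.mpr (ne_of_lt ht0)) _)
  field_simp
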